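/- For any type τ and kind κ, if Δ ⊢ τ : κ then Δ ⊢ bang(τ) : bang(κ), where bang(κ) = κ if {D,S} ⊆ κ, and bang(κ) = {D,S} otherwise. -/

import Mathlib

inductive Perm | D | S | E
deriving DecidableEq

abbrev Kind := Set Perm

inductive Mode | readOnly | writable | unboxed

def kindOf : Mode → Kind
  | .readOnly => {Perm.D, Perm.S}
  | .writable => {Perm.E}
  | .unboxed  => {Perm.D, Perm.S, Perm.E}

/-- Types, including observed type variables `ovar` (written α!). -/
inductive Ty
  | unit
  | prim
  | fn (a b : Ty)
  | var (n : ℕ)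
  | ovar (n : ℕ)
  | variant (ts : List Ty)
  | record (fs : List (Ty × Bool)) (m : Mode)

/-- bang on kinds. -/
noncomputable def bangKind (κ : Kind) : Kind :=
  open Classical in
  if ({Perm.D, Perm.S} : Kind) ⊆ κ then κ else {Perm.D, Perm.S}

/-- bang on modes. -/
def bangMode : Mode → Mode
  | .readOnly => .readOnly
  | .writable => .readOnly
  | .unboxed  => .unboxed

/-- bang on types. -/
def bangTy : Ty → Ty
  | .unit => .unit
  | .prim => .prim
  | .fn a b => .fn a b
  | .var n => .ovar n
  | .ovar n => .ovar n
  | .variant ts => .variant (ts.attach.map (fun t => bangTy t.1))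
  | .record fs m => .record (fs.attach.map (fun p => (bangTy p.1.1, p.1.2))) (bangMode m)
  decreasing_by
  · simp only [Ty.variant.sizeOf_spec]
    have := List.sizeOf_lt_of_mem t.2; omega
  · simp only [Ty.record.sizeOf_spec]
    have := List.sizeOf_lt_of_mem p.2
    cases hp : p.1 with | mk a b => rw [hp] at this; simp at this ⊢; omega

/-- The kinding judgement `Δ ⊢ τ : κ`. -/
inductive Kinding (Δ : ℕ → Kind) : Ty → Kind → Prop
  | unit : Kinding Δ .unit κ
  | prim : Kinding Δ .prim κ
  | fn : Kinding Δ (.fn a b) κ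
  | var : κ ⊆ Δ n → Kinding Δ (.var n) κ
  | ovar : κ ⊆ bangKind (Δ n) → Kinding Δ (.ovar n) κ
  | variant : (∀ t ∈ ts, Kinding Δ t κ) → Kinding Δ (.variant ts) κ
  | record : κ ⊆ kindOf m → (∀ p ∈ fs, p.2 = false → Kinding Δ p.1 κ) →
      Kinding Δ (.record fs m) κ

lemma bangKind_mono {κ κ' : Kind} (h : κ ⊆ κ') : bangKind κ ⊆ bangKind κ' := by
  unfold bangKind
  split
  · split
    · exact h
    · exact fun _ hx => by simp_all [Set.subset_def]
  · split
    · exact fun x hx => ‹_ ⊆ κ'› hx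
    · exact fun x hx => hx

lemma bangKind_idem (κ : Kind) : bangKind (bangKind κ) = bangKind κ := by
  unfold bangKind
  split
  · rename_i hk; simp [hk]
  · rename_i hk; simp only [hk, if_false, ite_self]

/-- Kinding for bang: if `Δ ⊢ τ : κ` then `Δ ⊢ bang(τ) : bang(κ)`. -/
theorem kinding_bang {Δ : ℕ → Kind} {τ : Ty} {κ : Kind}
    (h : Kinding Δ τ κ) : Kinding Δ (bangTy τ) (bangKind κ) := by
  induction h with
  | unit => rw [bangTy]; exact .unit
  | prim => rw [bangTy]; exact .prim
  | fn => rw [bangTy]; exact .fn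
  | var h => rw [bangTy]; exact .ovar (bangKind_mono h)
  | ovar h =>
      rw [bangTy]
      exact .ovar (by simpa [bangKind_idem] using bangKind_mono h)
  | variant h ih =>
      rw [bangTy]
      refine .variant ?_
      intro t ht
      simp only [List.mem_map, List.mem_attach, true_and, Subtype.exists] at ht
      obtain ⟨a, ha, rfl⟩ := ht
      exact ih a ha
  | record hsub h ih =>
      rename_i κ' m fs
      rw [bangTy]
      refine .record ?_ ?_
      · cases m with
        | readOnly =>
            simp only [bangMode, kindOf] at *
            unfold bangKind
            split
            · exact hsub
            · exact fun x hx => hx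
        | writable =>
            simp only [bangMode, kindOf] at *
            unfold bangKind
            split
            · rename_i hds
              exact absurd (hsub (hds (by simp : Perm.D ∈ _))) (by simp)
            · exact fun x hx => hx
        | unboxed =>
            simp only [bangMode, kindOf] at *
            unfold bangKind
            split
            · exact hsub
            · intro x hx; simp only [Set.mem_insert_iff, Set.mem_singleton_iff] at hx ⊢
              tauto
      · intro p hp hfalse
        simp only [List.mem_map, List.mem_attach, true_and, Subtype.exists] at hp
        obtain ⟨a, ha, rfl⟩ := hp
        exact ih a ha (by simpa using hfalse)
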